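/- Let y ∈ ℝⁿ, x ∈ ℝⁿ a continuous covariate, and r : {1,…,n} → {1,…,L} a categorical covariate with all group counts n_ℓ = #{i : r(i) = ℓ} positive; write π̂_ℓ = n_ℓ/n, x̄_ℓ = n_ℓ^{-1} ∑_{i : r(i)=ℓ} x_i, and σ̂²_{x[ℓ]} = n_ℓ^{-1} ∑_{i : r(i)=ℓ} x_i² − x̄_ℓ². Assume the equal-variance condition: σ̂²_{x[ℓ]} = σ̂²_{x[1]} for all ℓ = 1,…,L. Consider (a) the main-only model: minimize ∑_i (y_i − α₀ − α₁ x_i − β_{r(i)})² subject to ∑_ℓ π̂_ℓ β_ℓ = 0; and (b) the cat-modified model: minimize ∑_i (y_i − α₀ − α₁ x_i − β_{r(i)} − γ_{r(i)} x_i)² subject to ∑_ℓ π̂_ℓ β_ℓ = 0 and ∑_ℓ π̂_ℓ γ_ℓ = 0. Assume both constrained least-squares problems have unique minimizers. Then the estimated main x-effects coincide: α̂₁^M = α̂₁. -/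

import Mathlib

open Finset

/-- The (scaled) sample variance of `x` within group `ℓ` of the categorical covariate `r`:
`σ̂²_{x[ℓ]} = n_ℓ⁻¹ ∑_{i : r i = ℓ} x i ^ 2 − x̄_ℓ ^ 2`. -/
noncomputable def groupVar {n L : ℕ} (x : Fin n → ℝ) (r : Fin n → Fin L) (ℓ : Fin L) : ℝ :=
  (∑ i ∈ Finset.univ.filter (fun i : Fin n => r i = ℓ), x i ^ 2) /
      ((Finset.univ.filter (fun i : Fin n => r i = ℓ)).card : ℝ) -
    ((∑ i ∈ Finset.univ.filter (fun i : Fin n => r i = ℓ), x i) /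
      ((Finset.univ.filter (fun i : Fin n => r i = ℓ)).card : ℝ)) ^ 2

lemma quad_aux (B C : ℝ) (hC : 0 ≤ C) (h : ∀ t : ℝ, 0 ≤ t^2 * C - 2 * t * B) : B = 0 := by
  have hC1 : (0:ℝ) < C + 1 := by linarith
  have h1 := h (B / (C + 1))
  have h2 : B / (C + 1) * (C + 1) = B := div_mul_cancel₀ _ (ne_of_gt hC1)
  nlinarith [sq_nonneg (B / (C + 1)), sq_nonneg B]

lemma orth_of_min {m : ℕ} (ε D : Fin m → ℝ)
    (h : ∀ t : ℝ, ∑ i, (ε i)^2 ≤ ∑ i, (ε i - t * D i)^2) :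
    ∑ i, ε i * D i = 0 := by
  apply quad_aux _ (∑ i, (D i)^2) (Finset.sum_nonneg fun i _ => sq_nonneg _)
  intro t
  have expand : ∑ i, (ε i - t * D i)^2
      = ∑ i, (ε i)^2 + (t^2 * ∑ i, (D i)^2 - 2 * t * ∑ i, ε i * D i) := by
    rw [Finset.mul_sum, Finset.mul_sum, ← Finset.sum_sub_distrib, ← Finset.sum_add_distrib]
    exact Finset.sum_congr rfl fun i _ => by ring
  have := h t
  rw [expand] at this
  linarith

/-- Theorem 3: invariance of the main `x`-effect in the ANCOVA model.
Under abundance-based constraints and the equal-variance condition, the estimated main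
`x`-effect of the main-only model coincides with that of the cat-modified model that
additionally includes the categorical-continuous interaction.  Both constrained
least-squares problems are assumed to have unique minimizers. -/
theorem abc_ancova_slope_invariance
    {n L : ℕ} (hL : 0 < L)
    (y x : Fin n → ℝ) (r : Fin n → Fin L)
    (hcount : ∀ ℓ : Fin L, 0 < (univ.filter (fun i : Fin n => r i = ℓ)).card)
    -- equal-variance condition
    (heqvar : ∀ ℓ : Fin L, groupVar x r ℓ = groupVar x r ⟨0, hL⟩)
    -- main-only estimates
    (α₀M α₁M : ℝ) (βM : Fin L → ℝ)
    -- cat-modified estimates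
    (α₀ α₁ : ℝ) (β : Fin L → ℝ) (γ : Fin L → ℝ)
    -- ABC for the main-only estimator
    (hM : ∑ ℓ : Fin L,
      (((univ.filter (fun i : Fin n => r i = ℓ)).card : ℝ) / n) * βM ℓ = 0)
    -- the main-only estimator is a constrained least-squares minimizer
    (hMmin : ∀ (a0 a1 : ℝ) (b : Fin L → ℝ),
      (∑ ℓ : Fin L,
        (((univ.filter (fun i : Fin n => r i = ℓ)).card : ℝ) / n) * b ℓ = 0) →
      ∑ i : Fin n, (y i - (α₀M + α₁M * x i + βM (r i))) ^ 2 ≤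
        ∑ i : Fin n, (y i - (a0 + a1 * x i + b (r i))) ^ 2)
    -- ... and it is the unique such minimizer
    (hMuniq : ∀ (a0 a1 : ℝ) (b : Fin L → ℝ),
      (∑ ℓ : Fin L,
        (((univ.filter (fun i : Fin n => r i = ℓ)).card : ℝ) / n) * b ℓ = 0) →
      (∑ i : Fin n, (y i - (a0 + a1 * x i + b (r i))) ^ 2 ≤
        ∑ i : Fin n, (y i - (α₀M + α₁M * x i + βM (r i))) ^ 2) →
      a0 = α₀M ∧ a1 = α₁M ∧ b = βM)
    -- ABCs for the cat-modified estimator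
    (hC1 : ∑ ℓ : Fin L,
      (((univ.filter (fun i : Fin n => r i = ℓ)).card : ℝ) / n) * β ℓ = 0)
    (hC2 : ∑ ℓ : Fin L,
      (((univ.filter (fun i : Fin n => r i = ℓ)).card : ℝ) / n) * γ ℓ = 0)
    -- the cat-modified estimator is a constrained least-squares minimizer
    (hCmin : ∀ (a0 a1 : ℝ) (b g : Fin L → ℝ),
      (∑ ℓ : Fin L,
        (((univ.filter (fun i : Fin n => r i = ℓ)).card : ℝ) / n) * b ℓ = 0) →
      (∑ ℓ : Fin L,
        (((univ.filter (fun i : Fin n => r i = ℓ)).card : ℝ) / n) * g ℓ = 0) →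
      ∑ i : Fin n, (y i - (α₀ + α₁ * x i + β (r i) + γ (r i) * x i)) ^ 2 ≤
        ∑ i : Fin n, (y i - (a0 + a1 * x i + b (r i) + g (r i) * x i)) ^ 2)
    -- ... and it is the unique such minimizer
    (hCuniq : ∀ (a0 a1 : ℝ) (b g : Fin L → ℝ),
      (∑ ℓ : Fin L,
        (((univ.filter (fun i : Fin n => r i = ℓ)).card : ℝ) / n) * b ℓ = 0) →
      (∑ ℓ : Fin L,
        (((univ.filter (fun i : Fin n => r i = ℓ)).card : ℝ) / n) * g ℓ = 0) →
      (∑ i : Fin n, (y i - (a0 + a1 * x i + b (r i) + g (r i) * x i)) ^ 2 ≤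
        ∑ i : Fin n, (y i - (α₀ + α₁ * x i + β (r i) + γ (r i) * x i)) ^ 2) →
      a0 = α₀ ∧ a1 = α₁ ∧ b = β ∧ g = γ) :
    α₁M = α₁ := by
  classical
  -- abbreviations
  set F : Fin L → Finset (Fin n) := fun ℓ => univ.filter (fun i : Fin n => r i = ℓ) with hF
  have Nl : Fin L → ℝ := fun ℓ => ((F ℓ).card : ℝ)
  -- basic facts
  have hNlpos : ∀ ℓ, (0:ℝ) < ((F ℓ).card : ℝ) := fun ℓ => by exact_mod_cast hcount ℓ
  have hNlne : ∀ ℓ, ((F ℓ).card : ℝ) ≠ 0 := fun ℓ => ne_of_gt (hNlpos ℓ)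
  have hnpos : 0 < n := by
    have h1 := hcount ⟨0, hL⟩
    have h2 : (univ.filter (fun i : Fin n => r i = (⟨0, hL⟩ : Fin L))).card ≤ n := by
      simpa using Finset.card_filter_le univ (fun i : Fin n => r i = (⟨0, hL⟩ : Fin L))
    omega
  have hnne : (n:ℝ) ≠ 0 := by positivity
  have hsumN : ∑ ℓ : Fin L, ((F ℓ).card : ℝ) = (n:ℝ) := by
    have : (Fintype.card (Fin n)) = ∑ ℓ : Fin L, (F ℓ).card := by
      rw [← Finset.card_univ]
      exact Finset.card_eq_sum_card_fiberwise (fun i _ => mem_univ (r i))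
    rw [Fintype.card_fin] at this
    exact_mod_cast this.symm
  have hsumpi : ∑ ℓ : Fin L, ((F ℓ).card : ℝ) / n = 1 := by
    rw [← Finset.sum_div, hsumN, div_self hnne]
  -- main-only orthogonality
  have mainOrth : ∀ (d0 d1 : ℝ) (db : Fin L → ℝ),
      (∑ ℓ : Fin L, (((F ℓ).card : ℝ) / n) * db ℓ = 0) →
      ∑ i : Fin n, (y i - (α₀M + α₁M * x i + βM (r i))) * (d0 + d1 * x i + db (r i)) = 0 := by
    intro d0 d1 db hdb
    apply orth_of_min (fun i => y i - (α₀M + α₁M * x i + βM (r i)))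
      (fun i => d0 + d1 * x i + db (r i))
    intro t
    have hb : ∑ ℓ : Fin L, (((F ℓ).card : ℝ) / n) * (βM ℓ + t * db ℓ) = 0 := by
      have e : ∑ ℓ : Fin L, (((F ℓ).card : ℝ) / n) * (βM ℓ + t * db ℓ)
          = (∑ ℓ : Fin L, (((F ℓ).card : ℝ) / n) * βM ℓ)
            + t * ∑ ℓ : Fin L, (((F ℓ).card : ℝ) / n) * db ℓ := by
        rw [Finset.mul_sum, ← Finset.sum_add_distrib]
        exact Finset.sum_congr rfl fun ℓ _ => by ring
      rw [e, hM, hdb]; ring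
    have hmin := hMmin (α₀M + t * d0) (α₁M + t * d1) (fun ℓ => βM ℓ + t * db ℓ) hb
    have heq : ∑ i : Fin n,
        (y i - ((α₀M + t * d0) + (α₁M + t * d1) * x i + (βM (r i) + t * db (r i)))) ^ 2
        = ∑ i : Fin n,
          ((fun i => y i - (α₀M + α₁M * x i + βM (r i))) i
            - t * ((fun i => d0 + d1 * x i + db (r i)) i)) ^ 2 :=
      Finset.sum_congr rfl fun i _ => by ring
    calc ∑ i : Fin n, ((fun i => y i - (α₀M + α₁M * x i + βM (r i))) i) ^ 2
        = ∑ i : Fin n, (y i - (α₀M + α₁M * x i + βM (r i))) ^ 2 := rfl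
      _ ≤ _ := hmin
      _ = _ := heq
  -- cat-modified orthogonality
  have catOrth : ∀ (d0 d1 : ℝ) (db dg : Fin L → ℝ),
      (∑ ℓ : Fin L, (((F ℓ).card : ℝ) / n) * db ℓ = 0) →
      (∑ ℓ : Fin L, (((F ℓ).card : ℝ) / n) * dg ℓ = 0) →
      ∑ i : Fin n, (y i - (α₀ + α₁ * x i + β (r i) + γ (r i) * x i))
        * (d0 + d1 * x i + db (r i) + dg (r i) * x i) = 0 := by
    intro d0 d1 db dg hdb hdg
    apply orth_of_min (fun i => y i - (α₀ + α₁ * x i + β (r i) + γ (r i) * x i))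
      (fun i => d0 + d1 * x i + db (r i) + dg (r i) * x i)
    intro t
    have hb : ∑ ℓ : Fin L, (((F ℓ).card : ℝ) / n) * (β ℓ + t * db ℓ) = 0 := by
      have e : ∑ ℓ : Fin L, (((F ℓ).card : ℝ) / n) * (β ℓ + t * db ℓ)
          = (∑ ℓ : Fin L, (((F ℓ).card : ℝ) / n) * β ℓ)
            + t * ∑ ℓ : Fin L, (((F ℓ).card : ℝ) / n) * db ℓ := by
        rw [Finset.mul_sum, ← Finset.sum_add_distrib]
        exact Finset.sum_congr rfl fun ℓ _ => by ring
      rw [e, hC1, hdb]; ring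
    have hg : ∑ ℓ : Fin L, (((F ℓ).card : ℝ) / n) * (γ ℓ + t * dg ℓ) = 0 := by
      have e : ∑ ℓ : Fin L, (((F ℓ).card : ℝ) / n) * (γ ℓ + t * dg ℓ)
          = (∑ ℓ : Fin L, (((F ℓ).card : ℝ) / n) * γ ℓ)
            + t * ∑ ℓ : Fin L, (((F ℓ).card : ℝ) / n) * dg ℓ := by
        rw [Finset.mul_sum, ← Finset.sum_add_distrib]
        exact Finset.sum_congr rfl fun ℓ _ => by ring
      rw [e, hC2, hdg]; ring
    have hmin := hCmin (α₀ + t * d0) (α₁ + t * d1) (fun ℓ => β ℓ + t * db ℓ)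
      (fun ℓ => γ ℓ + t * dg ℓ) hb hg
    have heq : ∑ i : Fin n,
        (y i - ((α₀ + t * d0) + (α₁ + t * d1) * x i + (β (r i) + t * db (r i))
          + (γ (r i) + t * dg (r i)) * x i)) ^ 2
        = ∑ i : Fin n,
          ((fun i => y i - (α₀ + α₁ * x i + β (r i) + γ (r i) * x i)) i
            - t * ((fun i => d0 + d1 * x i + db (r i) + dg (r i) * x i) i)) ^ 2 :=
      Finset.sum_congr rfl fun i _ => by ring
    calc ∑ i : Fin n, ((fun i => y i - (α₀ + α₁ * x i + β (r i) + γ (r i) * x i)) i) ^ 2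
        = ∑ i : Fin n, (y i - (α₀ + α₁ * x i + β (r i) + γ (r i) * x i)) ^ 2 := rfl
      _ ≤ _ := hmin
      _ = _ := heq
  -- residuals
  set εM : Fin n → ℝ := fun i => y i - (α₀M + α₁M * x i + βM (r i)) with hεM
  set εC : Fin n → ℝ := fun i => y i - (α₀ + α₁ * x i + β (r i) + γ (r i) * x i) with hεC
  -- total sums vanish
  have hMsum : ∑ i : Fin n, εM i = 0 := by
    have := mainOrth 1 0 (fun _ => 0) (by simp)
    simpa only [zero_mul, add_zero, mul_one] using this
  have hMx : ∑ i : Fin n, εM i * x i = 0 := by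
    have := mainOrth 0 1 (fun _ => 0) (by simp)
    simpa only [zero_add, add_zero, one_mul] using this
  have hCsum : ∑ i : Fin n, εC i = 0 := by
    have := catOrth 1 0 (fun _ => 0) (fun _ => 0) (by simp) (by simp)
    simpa only [zero_mul, add_zero, mul_one] using this
  have hCx : ∑ i : Fin n, εC i * x i = 0 := by
    have := catOrth 0 1 (fun _ => 0) (fun _ => 0) (by simp) (by simp)
    simpa only [zero_add, add_zero, one_mul, zero_mul] using this
  -- indicator direction has zero weighted sum
  have hind : ∀ ℓ : Fin L, ∑ k : Fin L, (((F k).card : ℝ) / n)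
      * ((if k = ℓ then (1:ℝ) else 0) - ((F ℓ).card : ℝ) / n) = 0 := by
    intro ℓ
    have e : ∑ k : Fin L, (((F k).card : ℝ) / n)
        * ((if k = ℓ then (1:ℝ) else 0) - ((F ℓ).card : ℝ) / n)
        = (∑ k : Fin L, if k = ℓ then ((F k).card : ℝ) / n else 0)
          - (((F ℓ).card : ℝ) / n) * ∑ k : Fin L, ((F k).card : ℝ) / n := by
      rw [Finset.mul_sum, ← Finset.sum_sub_distrib]
      exact Finset.sum_congr rfl fun k _ => by by_cases h : k = ℓ <;> simp [h] <;> ring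
    rw [e, hsumpi, Finset.sum_ite_eq' univ ℓ (fun k => ((F k).card : ℝ) / n)]
    simp
  -- per-group sums of residuals vanish
  have hMgrp : ∀ ℓ : Fin L, ∑ i ∈ F ℓ, εM i = 0 := by
    intro ℓ
    have h0 := mainOrth 0 0
      (fun k => (if k = ℓ then (1:ℝ) else 0) - ((F ℓ).card : ℝ) / n) (hind ℓ)
    have e : ∑ i : Fin n, εM i
        * (0 + 0 * x i + ((if r i = ℓ then (1:ℝ) else 0) - ((F ℓ).card : ℝ) / n))
        = (∑ i : Fin n, if r i = ℓ then εM i else 0)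
          - (((F ℓ).card : ℝ) / n) * ∑ i : Fin n, εM i := by
      rw [Finset.mul_sum, ← Finset.sum_sub_distrib]
      exact Finset.sum_congr rfl fun i _ => by by_cases h : r i = ℓ <;> simp [h] <;> ring
    rw [e, hMsum] at h0
    rw [← Finset.sum_filter] at h0
    simpa using h0
  have hCgrp : ∀ ℓ : Fin L, ∑ i ∈ F ℓ, εC i = 0 := by
    intro ℓ
    have h0 := catOrth 0 0
      (fun k => (if k = ℓ then (1:ℝ) else 0) - ((F ℓ).card : ℝ) / n) (fun _ => 0)
      (hind ℓ) (by simp)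
    have e : ∑ i : Fin n, εC i
        * (0 + 0 * x i + ((if r i = ℓ then (1:ℝ) else 0) - ((F ℓ).card : ℝ) / n)
          + 0 * x i)
        = (∑ i : Fin n, if r i = ℓ then εC i else 0)
          - (((F ℓ).card : ℝ) / n) * ∑ i : Fin n, εC i := by
      rw [Finset.mul_sum, ← Finset.sum_sub_distrib]
      exact Finset.sum_congr rfl fun i _ => by by_cases h : r i = ℓ <;> simp [h] <;> ring
    rw [e, hCsum] at h0
    rw [← Finset.sum_filter] at h0
    simpa using h0
  -- group statistics
  set S : Fin L → ℝ := fun ℓ => ∑ i ∈ F ℓ, x i with hS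
  set Q : Fin L → ℝ := fun ℓ => ∑ i ∈ F ℓ, x i ^ 2 with hQdef
  set σ2 : ℝ := groupVar x r ⟨0, hL⟩ with hσ2
  have hQNl : ∀ ℓ : Fin L, Q ℓ * ((F ℓ).card : ℝ) = ((F ℓ).card : ℝ) ^ 2 * σ2 + S ℓ ^ 2 := by
    intro ℓ
    have hv := heqvar ℓ
    rw [groupVar] at hv
    have hne := hNlne ℓ
    have hvc : Q ℓ / ((F ℓ).card : ℝ) - (S ℓ / ((F ℓ).card : ℝ)) ^ 2 = σ2 := hv
    have h1 : Q ℓ / ((F ℓ).card : ℝ) * ((F ℓ).card : ℝ) = Q ℓ := div_mul_cancel₀ _ hne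
    have h2 : S ℓ / ((F ℓ).card : ℝ) * ((F ℓ).card : ℝ) = S ℓ := div_mul_cancel₀ _ hne
    have hq : Q ℓ / ((F ℓ).card : ℝ) = σ2 + (S ℓ / ((F ℓ).card : ℝ)) ^ 2 := by
      linarith [hvc]
    calc Q ℓ * ((F ℓ).card : ℝ)
        = (Q ℓ / ((F ℓ).card : ℝ) * ((F ℓ).card : ℝ)) * ((F ℓ).card : ℝ) := by rw [h1]
      _ = (σ2 + (S ℓ / ((F ℓ).card : ℝ)) ^ 2) * ((F ℓ).card : ℝ) * ((F ℓ).card : ℝ) := by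
          rw [hq]
      _ = σ2 * ((F ℓ).card : ℝ) ^ 2 + (S ℓ / ((F ℓ).card : ℝ) * ((F ℓ).card : ℝ)) ^ 2 := by
          ring
      _ = ((F ℓ).card : ℝ) ^ 2 * σ2 + S ℓ ^ 2 := by rw [h2]; ring
  -- within each group, residual difference in terms of parameters
  have key1 : ∀ ℓ : Fin L, ((F ℓ).card : ℝ) * ((α₀ - α₀M) + (β ℓ - βM ℓ))
      + ((α₁ - α₁M) + γ ℓ) * S ℓ = 0 := by
    intro ℓ
    have hdiff : ∑ i ∈ F ℓ, (εM i - εC i)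
        = ((F ℓ).card : ℝ) * ((α₀ - α₀M) + (β ℓ - βM ℓ)) + ((α₁ - α₁M) + γ ℓ) * S ℓ := by
      have e1 : ∑ i ∈ F ℓ, (εM i - εC i)
          = ∑ i ∈ F ℓ, (((α₀ - α₀M) + (β ℓ - βM ℓ)) + ((α₁ - α₁M) + γ ℓ) * x i) := by
        refine Finset.sum_congr rfl fun i hi => ?_
        have hri : r i = ℓ := by simpa [hF] using hi
        simp only [hεM, hεC, hri]
        ring
      rw [e1, Finset.sum_add_distrib, Finset.sum_const, ← Finset.mul_sum,
        nsmul_eq_mul]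
    rw [Finset.sum_sub_distrib, hMgrp ℓ, hCgrp ℓ] at hdiff
    linarith [hdiff]
  have key2 : ∑ ℓ : Fin L, (((α₀ - α₀M) + (β ℓ - βM ℓ)) * S ℓ
      + ((α₁ - α₁M) + γ ℓ) * Q ℓ) = 0 := by
    have htot : ∑ i : Fin n, (εM i - εC i) * x i = 0 := by
      rw [Finset.sum_sub_distrib] at *
      have e : ∑ i : Fin n, (εM i - εC i) * x i
          = ∑ i : Fin n, εM i * x i - ∑ i : Fin n, εC i * x i := by
        rw [← Finset.sum_sub_distrib]
        exact Finset.sum_congr rfl fun i _ => by ring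
      rw [e, hMx, hCx]; ring
    have hfib : ∑ ℓ : Fin L, ∑ i ∈ F ℓ, (εM i - εC i) * x i
        = ∑ i : Fin n, (εM i - εC i) * x i := by
      rw [hF]
      exact Finset.sum_fiberwise _ _ _
    have e2 : ∀ ℓ : Fin L, ∑ i ∈ F ℓ, (εM i - εC i) * x i
        = ((α₀ - α₀M) + (β ℓ - βM ℓ)) * S ℓ + ((α₁ - α₁M) + γ ℓ) * Q ℓ := by
      intro ℓ
      have e1 : ∑ i ∈ F ℓ, (εM i - εC i) * x i
          = ∑ i ∈ F ℓ, (((α₀ - α₀M) + (β ℓ - βM ℓ)) * x i + ((α₁ - α₁M) + γ ℓ) * x i ^ 2) := by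
        refine Finset.sum_congr rfl fun i hi => ?_
        have hri : r i = ℓ := by simpa [hF] using hi
        simp only [hεM, hεC, hri]
        ring
      rw [e1, Finset.sum_add_distrib, ← Finset.mul_sum, ← Finset.mul_sum]
    calc ∑ ℓ : Fin L, (((α₀ - α₀M) + (β ℓ - βM ℓ)) * S ℓ + ((α₁ - α₁M) + γ ℓ) * Q ℓ)
        = ∑ ℓ : Fin L, ∑ i ∈ F ℓ, (εM i - εC i) * x i :=
          Finset.sum_congr rfl fun ℓ _ => (e2 ℓ).symm
      _ = 0 := by rw [hfib, htot]
  -- rewrite each summand of key2 using key1 and the variance identity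
  have key3 : ∀ ℓ : Fin L, ((α₀ - α₀M) + (β ℓ - βM ℓ)) * S ℓ + ((α₁ - α₁M) + γ ℓ) * Q ℓ
      = ((α₁ - α₁M) + γ ℓ) * ((F ℓ).card : ℝ) * σ2 := by
    intro ℓ
    have hne := hNlne ℓ
    have h1 := key1 ℓ
    have h2 := hQNl ℓ
    have h3 : ((F ℓ).card : ℝ) * (((α₀ - α₀M) + (β ℓ - βM ℓ)) * S ℓ
        + ((α₁ - α₁M) + γ ℓ) * Q ℓ)
        = ((F ℓ).card : ℝ) * (((α₁ - α₁M) + γ ℓ) * ((F ℓ).card : ℝ) * σ2) := by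
      linear_combination S ℓ * h1 + ((α₁ - α₁M) + γ ℓ) * h2
    exact mul_left_cancel₀ hne h3
  -- sum up
  have key4 : σ2 * ((n : ℝ) * (α₁ - α₁M)) = 0 := by
    have hγ : ∑ ℓ : Fin L, ((F ℓ).card : ℝ) * γ ℓ = 0 := by
      have e : ∑ ℓ : Fin L, ((F ℓ).card : ℝ) * γ ℓ
          = (n : ℝ) * ∑ ℓ : Fin L, (((F ℓ).card : ℝ) / n) * γ ℓ := by
        rw [Finset.mul_sum]
        exact Finset.sum_congr rfl fun ℓ _ => by
          rw [← mul_assoc, mul_div_assoc', mul_div_right_comm, div_self hnne, one_mul]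
      rw [e, hC2, mul_zero]
    have e : ∑ ℓ : Fin L, (((α₀ - α₀M) + (β ℓ - βM ℓ)) * S ℓ + ((α₁ - α₁M) + γ ℓ) * Q ℓ)
        = σ2 * ((α₁ - α₁M) * ∑ ℓ : Fin L, ((F ℓ).card : ℝ))
            + σ2 * ∑ ℓ : Fin L, ((F ℓ).card : ℝ) * γ ℓ := by
      calc ∑ ℓ : Fin L, (((α₀ - α₀M) + (β ℓ - βM ℓ)) * S ℓ + ((α₁ - α₁M) + γ ℓ) * Q ℓ)
          = ∑ ℓ : Fin L, (σ2 * ((α₁ - α₁M) * ((F ℓ).card : ℝ))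
              + σ2 * (((F ℓ).card : ℝ) * γ ℓ)) :=
            Finset.sum_congr rfl fun ℓ _ => by rw [key3 ℓ]; ring
        _ = _ := by
            rw [Finset.sum_add_distrib, ← Finset.mul_sum, ← Finset.mul_sum,
              ← Finset.mul_sum]
    rw [e, hγ, hsumN] at key2
    linarith [key2]
  -- case split on the common variance
  rcases eq_or_ne σ2 0 with hσ0 | hσne
  · -- degenerate case: x is constant within each group; contradicts uniqueness
    exfalso
    -- within each group, x equals the group mean
    have hx : ∀ i : Fin n, x i = S (r i) / ((F (r i)).card : ℝ) := by
      intro i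
      set ℓ := r i with hℓ
      have hQ0 : Q ℓ * ((F ℓ).card : ℝ) = S ℓ ^ 2 := by
        have := hQNl ℓ
        rw [hσ0] at this
        linarith [this]
      have hsq : ∑ j ∈ F ℓ, (x j - S ℓ / ((F ℓ).card : ℝ)) ^ 2 = 0 := by
        have e1 : ∑ j ∈ F ℓ, (x j - S ℓ / ((F ℓ).card : ℝ)) ^ 2
            = Q ℓ - (2 * (S ℓ / ((F ℓ).card : ℝ))) * S ℓ
              + ((F ℓ).card : ℝ) * (S ℓ / ((F ℓ).card : ℝ)) ^ 2 := by
          calc ∑ j ∈ F ℓ, (x j - S ℓ / ((F ℓ).card : ℝ)) ^ 2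
              = ∑ j ∈ F ℓ, (x j ^ 2 - (2 * (S ℓ / ((F ℓ).card : ℝ))) * x j
                + (S ℓ / ((F ℓ).card : ℝ)) ^ 2) :=
                Finset.sum_congr rfl fun j _ => by ring
            _ = _ := by
                rw [Finset.sum_add_distrib, Finset.sum_sub_distrib, ← Finset.mul_sum,
                  Finset.sum_const, nsmul_eq_mul]
        rw [e1]
        have hne := hNlne ℓ
        have h2 : S ℓ / ((F ℓ).card : ℝ) * ((F ℓ).card : ℝ) = S ℓ := div_mul_cancel₀ _ hne
        have hgoal : (Q ℓ - (2 * (S ℓ / ((F ℓ).card : ℝ))) * S ℓ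
            + ((F ℓ).card : ℝ) * (S ℓ / ((F ℓ).card : ℝ)) ^ 2) * ((F ℓ).card : ℝ) = 0 := by
          linear_combination hQ0 + (S ℓ / ((F ℓ).card : ℝ) * ((F ℓ).card : ℝ) - S ℓ) * h2
        rcases mul_eq_zero.mp hgoal with h | h
        · exact h
        · exact absurd h hne
      have hmem : i ∈ F ℓ := by simp [hF, hℓ]
      have := (Finset.sum_eq_zero_iff_of_nonneg
        (fun j _ => sq_nonneg (x j - S ℓ / ((F ℓ).card : ℝ)))).mp hsq i hmem
      have h0 : x i - S ℓ / ((F ℓ).card : ℝ) = 0 := by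
        exact pow_eq_zero_iff (n := 2) (by norm_num) |>.mp this
      linarith [h0]
    -- build an alternative minimizer of the cat-modified problem
    set m : ℝ := ∑ ℓ : Fin L, (((F ℓ).card : ℝ) / n) * (S ℓ / ((F ℓ).card : ℝ)) with hm
    have hb : ∑ ℓ : Fin L, (((F ℓ).card : ℝ) / n)
        * (β ℓ - S ℓ / ((F ℓ).card : ℝ) + m) = 0 := by
      have e : ∑ ℓ : Fin L, (((F ℓ).card : ℝ) / n) * (β ℓ - S ℓ / ((F ℓ).card : ℝ) + m)
          = (∑ ℓ : Fin L, (((F ℓ).card : ℝ) / n) * β ℓ)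
            - (∑ ℓ : Fin L, (((F ℓ).card : ℝ) / n) * (S ℓ / ((F ℓ).card : ℝ)))
            + m * ∑ ℓ : Fin L, ((F ℓ).card : ℝ) / n := by
        rw [Finset.mul_sum, ← Finset.sum_sub_distrib, ← Finset.sum_add_distrib]
        exact Finset.sum_congr rfl fun ℓ _ => by ring
      rw [e, hC1, hsumpi, ← hm]
      ring
    have hsse : ∑ i : Fin n, (y i - ((α₀ - m) + (α₁ + 1) * x i
        + (β (r i) - S (r i) / ((F (r i)).card : ℝ) + m) + γ (r i) * x i)) ^ 2
        = ∑ i : Fin n, (y i - (α₀ + α₁ * x i + β (r i) + γ (r i) * x i)) ^ 2 := by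
      refine Finset.sum_congr rfl fun i _ => ?_
      rw [hx i]
      ring
    have := hCuniq (α₀ - m) (α₁ + 1)
      (fun ℓ => β ℓ - S ℓ / ((F ℓ).card : ℝ) + m) γ hb hC2 (le_of_eq hsse)
    have h1 : α₁ + 1 = α₁ := this.2.1
    linarith
  · -- nondegenerate case: σ2 ≠ 0 forces the slopes to coincide
    have : (n : ℝ) * (α₁ - α₁M) = 0 := by
      rcases mul_eq_zero.mp key4 with h | h
      · exact absurd h hσne
      · exact h
    have h2 : α₁ - α₁M = 0 := by
      rcases mul_eq_zero.mp this with h | h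
      · exact absurd h hnne
      · exact h
    linarith
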